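/- Let n ≤ m and define operators X, Z_n on C^m by X|i⟩ = |i+1 mod m⟩ and Z_n|i⟩ = ω^i |i⟩ where ω = e^{2πi/n} is a primitive n-th root of unity. Let |ψ_{00}⟩ = (1/√n) ∑_{i=0}^{n−1} |i⟩⊗|i⟩ ∈ C^n ⊗ C^m and |ψ_{ij}⟩ = (I_n ⊗ X^i Z_n^j)|ψ_{00}⟩ for 0 ≤ i ≤ m−1, 0 ≤ j ≤ n−1. Then the mn vectors |ψ_{ij}⟩ form an orthonormal basis of C^n ⊗ C^m. -/

import Mathlib

open ComplexOrder

/-- `ω = e^{2πi/n}`, a primitive `n`-th root of unity. -/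
noncomputable def omegaC (n : ℕ) : ℂ := Complex.exp (2 * Real.pi * Complex.I / n)

/-- The cyclic shift operator `X` on `ℂ^m`: `X |j⟩ = |j + 1 mod m⟩`. -/
def shiftX (m : ℕ) [NeZero m] : Matrix (Fin m) (Fin m) ℂ :=
  fun i j => if i = j + 1 then 1 else 0

/-- The generalized clock operator `Z_n` on `ℂ^m`: `Z_n |i⟩ = ω^i |i⟩` with `ω = e^{2πi/n}`. -/
noncomputable def weylZ (n m : ℕ) : Matrix (Fin m) (Fin m) ℂ :=
  Matrix.diagonal fun i : Fin m => omegaC n ^ (i : ℕ)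

/-- The maximally entangled state `|ψ₀₀⟩ = (1/√n) ∑_{s<n} |s⟩ ⊗ |s⟩` in `ℂ^n ⊗ ℂ^m`. -/
noncomputable def psi00 (n m : ℕ) : Fin n × Fin m → ℂ :=
  fun p => if (p.1 : ℕ) = (p.2 : ℕ) then ((Real.sqrt n : ℝ)⁻¹ : ℂ) else 0

/-- Apply an operator `M` on `ℂ^m` to the second tensor factor of `ℂ^n ⊗ ℂ^m`. -/
noncomputable def applyB {n m : ℕ} (M : Matrix (Fin m) (Fin m) ℂ)
    (v : Fin n × Fin m → ℂ) : Fin n × Fin m → ℂ :=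
  fun p => ∑ c : Fin m, M p.2 c * v (p.1, c)

/-- `|ψ_{ij}⟩ = (I_n ⊗ X^i Z_n^j) |ψ₀₀⟩`. -/
noncomputable def psiV (n m : ℕ) [NeZero m] (i : Fin m) (j : Fin n) :
    Fin n × Fin m → ℂ :=
  applyB (shiftX m ^ (i : ℕ) * weylZ n m ^ (j : ℕ)) (psi00 n m)

/-- The rank-one projector `|v⟩⟨v|`. -/
noncomputable def proj {α : Type*} (v : α → ℂ) : Matrix α α ℂ :=
  fun p q => v p * star (v q)

/-- Partial trace over the second tensor factor. -/
noncomputable def trB {n m : ℕ} (ρ : Matrix (Fin n × Fin m) (Fin n × Fin m) ℂ) :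
    Matrix (Fin n) (Fin n) ℂ :=
  fun a a' => ∑ b : Fin m, ρ (a, b) (a', b)

/-- Partial trace over the first tensor factor. -/
noncomputable def trA {n m : ℕ} (ρ : Matrix (Fin n × Fin m) (Fin n × Fin m) ℂ) :
    Matrix (Fin m) (Fin m) ℂ :=
  fun b b' => ∑ a : Fin n, ρ (a, b) (a, b')

/-- the `m·n` vectors `|ψ_{ij}⟩` form an orthonormal basis of `ℂ^n ⊗ ℂ^m`
(with respect to the standard inner product). -/
lemma omegaC_prim (n : ℕ) [NeZero n] : IsPrimitiveRoot (omegaC n) n :=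
  Complex.isPrimitiveRoot_exp n (NeZero.ne n)

lemma shiftX_pow (m : ℕ) [NeZero m] (k : ℕ) (i j : Fin m) :
    (shiftX m ^ k) i j = if (i : ℕ) = ((j : ℕ) + k) % m then 1 else 0 := by
  induction k generalizing i j with
  | zero =>
    have : ((j : ℕ) + 0) % m = (j : ℕ) := by
      rw [Nat.add_zero, Nat.mod_eq_of_lt j.isLt]
    rw [pow_zero, Matrix.one_apply, this]
    simp [Fin.ext_iff]
  | succ k ih =>
    rw [pow_succ, Matrix.mul_apply]
    have : ∀ c : Fin m, (shiftX m ^ k) i c * shiftX m c j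
        = if c = j + 1 then (shiftX m ^ k) i c else 0 := by
      intro c; simp [shiftX]
    rw [Finset.sum_congr rfl fun c _ => this c, Finset.sum_ite_eq' Finset.univ (j+1)]
    simp only [Finset.mem_univ, if_true, ih]
    have hv : ((j + 1 : Fin m) : ℕ) = ((j : ℕ) + 1 % m) % m := by
      rw [Fin.add_def]; simp [Fin.val_one']
    have hm : (((j : ℕ) + 1 % m) % m + k) % m = ((j : ℕ) + (k + 1)) % m := by
      have h1 : ((j : ℕ) + 1 % m) % m + k ≡ ((j : ℕ) + 1) + k [MOD m] :=
        Nat.ModEq.add_right k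
          ((Nat.mod_modEq _ m).trans (Nat.ModEq.add_left _ (Nat.mod_modEq 1 m)))
      simpa [show (j : ℕ) + 1 + k = (j : ℕ) + (k + 1) by omega] using h1
    rw [hv, hm]

lemma psiV_apply (n m : ℕ) [NeZero n] [NeZero m] (hnm : n ≤ m) (i : Fin m) (j : Fin n)
    (a : Fin n) (b : Fin m) :
    psiV n m i j (a, b) =
      if (b : ℕ) = ((a : ℕ) + (i : ℕ)) % m then
        omegaC n ^ ((j : ℕ) * (a : ℕ)) * ((Real.sqrt n : ℝ)⁻¹ : ℂ) else 0 := by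
  have hZ : weylZ n m ^ (j : ℕ)
      = Matrix.diagonal (fun c : Fin m => omegaC n ^ ((j : ℕ) * (c : ℕ))) := by
    have hfun : ((fun c : Fin m => omegaC n ^ (c : ℕ)) ^ (j : ℕ))
        = fun c : Fin m => omegaC n ^ ((j : ℕ) * (c : ℕ)) := by
      funext c; rw [Pi.pow_apply, ← pow_mul, Nat.mul_comm]
    rw [weylZ, Matrix.diagonal_pow, hfun]
  have ham : (a : ℕ) < m := lt_of_lt_of_le a.isLt hnm
  rw [psiV, applyB]
  simp only [hZ, Matrix.mul_diagonal, psi00]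
  have hstep : ∀ c : Fin m,
      (shiftX m ^ (i : ℕ)) b c * omegaC n ^ ((j : ℕ) * (c : ℕ)) *
        (if (a : ℕ) = (c : ℕ) then ((Real.sqrt n : ℝ)⁻¹ : ℂ) else 0)
      = if c = Fin.castLE hnm a then
          (shiftX m ^ (i : ℕ)) b c * omegaC n ^ ((j : ℕ) * (c : ℕ)) *
            ((Real.sqrt n : ℝ)⁻¹ : ℂ) else 0 := by
    intro c
    by_cases h : c = Fin.castLE hnm a
    · subst h; simp
    · have : ¬ ((a : ℕ) = (c : ℕ)) := by
        intro hh; exact h (Fin.ext hh.symm)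
      simp [this, h]
  rw [Finset.sum_congr rfl fun c _ => hstep c,
    Finset.sum_ite_eq' Finset.univ (Fin.castLE hnm a)]
  simp only [Finset.mem_univ, if_true, shiftX_pow]
  simp only [Fin.coe_castLE]
  by_cases hb : (b : ℕ) = ((a : ℕ) + (i : ℕ)) % m <;> simp [hb]

lemma star_omegaC (n : ℕ) : star (omegaC n) = (omegaC n)⁻¹ := by
  have hc : (starRingEnd ℂ) (2 * (Real.pi : ℂ) * Complex.I / (n : ℂ))
      = -(2 * (Real.pi : ℂ) * Complex.I / (n : ℂ)) := by
    rw [map_div₀, map_mul, map_mul, Complex.conj_I]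
    simp [Complex.conj_ofReal, map_ofNat, neg_div]
  rw [omegaC, Complex.star_def, ← Complex.exp_conj, hc, Complex.exp_neg]

lemma star_omegaC_pow (n t : ℕ) : star (omegaC n ^ t) = (omegaC n ^ t)⁻¹ := by
  rw [star_pow, star_omegaC, inv_pow]

lemma psiV_inner (n m : ℕ) [NeZero n] [NeZero m] (hnm : n ≤ m) (i k : Fin m) (j l : Fin n) :
    ∑ p : Fin n × Fin m, star (psiV n m i j p) * psiV n m k l p =
      if i = k ∧ j = l then 1 else 0 := by
  have hω := omegaC_prim n
  have hω0 : omegaC n ≠ 0 := by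
    rw [omegaC]; exact Complex.exp_ne_zero _
  have hinv : ((Real.sqrt n : ℝ)⁻¹ : ℂ) * ((Real.sqrt n : ℝ)⁻¹ : ℂ) = ((n : ℕ) : ℂ)⁻¹ := by
    rw [← mul_inv, ← Complex.ofReal_mul, Real.mul_self_sqrt (Nat.cast_nonneg n)]
    norm_num
  rw [Fintype.sum_prod_type]
  have hb : ∀ a : Fin n,
      (∑ b : Fin m, star (psiV n m i j (a, b)) * psiV n m k l (a, b))
        = if i = k then
            star (omegaC n ^ ((j : ℕ) * (a : ℕ))) * omegaC n ^ ((l : ℕ) * (a : ℕ)) *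
              ((n : ℕ) : ℂ)⁻¹ else 0 := by
    intro a
    set b0 : Fin m := ⟨((a : ℕ) + (i : ℕ)) % m, Nat.mod_lt _ (Nat.pos_of_ne_zero (NeZero.ne m))⟩
      with hb0
    have hterm : ∀ b : Fin m,
        star (psiV n m i j (a, b)) * psiV n m k l (a, b)
          = if b = b0 then star (psiV n m i j (a, b0)) * psiV n m k l (a, b0) else 0 := by
      intro b
      by_cases h : b = b0
      · subst h; simp
      · have hne : ¬ ((b : ℕ) = ((a : ℕ) + (i : ℕ)) % m) := by
          intro hh; exact h (Fin.ext hh)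
        rw [psiV_apply n m hnm, if_neg hne, star_zero, zero_mul, if_neg h]
    rw [Finset.sum_congr rfl fun b _ => hterm b, Finset.sum_ite_eq' Finset.univ b0]
    simp only [Finset.mem_univ, if_true]
    by_cases hik : i = k
    · subst hik
      rw [psiV_apply n m hnm, psiV_apply n m hnm]
      have : (b0 : ℕ) = ((a : ℕ) + (i : ℕ)) % m := rfl
      rw [if_pos this, if_pos this, if_pos rfl]
      have hsr : star ((Real.sqrt n : ℝ)⁻¹ : ℂ) = ((Real.sqrt n : ℝ)⁻¹ : ℂ) := by
        simp [Complex.star_def, Complex.conj_ofReal]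
      rw [star_mul', hsr, mul_mul_mul_comm, hinv]
    · have hne2 : ¬ ((b0 : ℕ) = ((a : ℕ) + (k : ℕ)) % m) := by
        intro hh
        have hmod : ((a : ℕ) + (i : ℕ)) % m = ((a : ℕ) + (k : ℕ)) % m := hh
        have : (i : ℕ) % m = (k : ℕ) % m := Nat.ModEq.add_left_cancel' (a : ℕ) hmod
        rw [Nat.mod_eq_of_lt i.isLt, Nat.mod_eq_of_lt k.isLt] at this
        exact hik (Fin.ext this)
      rw [psiV_apply n m hnm k l, if_neg hne2, mul_zero, if_neg hik]
  rw [Finset.sum_congr rfl fun a _ => hb a]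
  by_cases hik : i = k
  · subst hik
    simp only [eq_self_iff_true, if_true, true_and]
    by_cases hjl : j = l
    · subst hjl
      rw [if_pos rfl]
      have h1 : ∀ a : Fin n,
          star (omegaC n ^ ((j : ℕ) * (a : ℕ))) * omegaC n ^ ((j : ℕ) * (a : ℕ)) *
            ((n : ℕ) : ℂ)⁻¹ = ((n : ℕ) : ℂ)⁻¹ := by
        intro a
        rw [star_omegaC_pow, inv_mul_cancel₀ (pow_ne_zero _ hω0), one_mul]
      rw [Finset.sum_congr rfl fun a _ => h1 a, Finset.sum_const, Finset.card_univ,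
        Fintype.card_fin, nsmul_eq_mul]
      exact mul_inv_cancel₀ (Nat.cast_ne_zero.mpr (NeZero.ne n))
    · rw [if_neg hjl]
      set x : ℂ := (omegaC n ^ (j : ℕ))⁻¹ * omegaC n ^ (l : ℕ) with hx
      have hterm : ∀ a : Fin n,
          star (omegaC n ^ ((j : ℕ) * (a : ℕ))) * omegaC n ^ ((l : ℕ) * (a : ℕ)) *
            ((n : ℕ) : ℂ)⁻¹ = x ^ (a : ℕ) * ((n : ℕ) : ℂ)⁻¹ := by
        intro a
        rw [star_omegaC_pow, hx, mul_pow, pow_mul, pow_mul, inv_pow]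
      rw [Finset.sum_congr rfl fun a _ => hterm a, ← Finset.sum_mul]
      have hxn : x ^ n = 1 := by
        rw [hx, mul_pow, inv_pow, ← pow_mul, ← pow_mul, mul_comm (j : ℕ) n,
          mul_comm (l : ℕ) n, pow_mul, pow_mul, hω.pow_eq_one, one_pow, one_pow]
        simp
      have hx1 : x ≠ 1 := by
        intro hx1
        apply hjl
        have : omegaC n ^ (l : ℕ) = omegaC n ^ (j : ℕ) := by
          have := hx1
          rw [hx] at this
          field_simp at this
          exact this
        exact Fin.ext ((hω.pow_inj l.isLt j.isLt this)).symm
      have : ∑ a : Fin n, x ^ (a : ℕ) = 0 := by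
        rw [Fin.sum_univ_eq_sum_range (fun t => x ^ t), geom_sum_eq hx1, hxn]
        simp
      rw [this, zero_mul]
  · simp [hik]

theorem psiV_orthonormal_basis (n m : ℕ) [NeZero n] [NeZero m] (hnm : n ≤ m) :
    (∀ (i k : Fin m) (j l : Fin n),
        ∑ p : Fin n × Fin m, star (psiV n m i j p) * psiV n m k l p =
          if i = k ∧ j = l then 1 else 0) ∧
      Submodule.span ℂ (Set.range fun q : Fin m × Fin n => psiV n m q.1 q.2) = ⊤ := by
  refine ⟨fun i k j l => psiV_inner n m hnm i k j l, ?_⟩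
  classical
  let f : Fin m × Fin n → EuclideanSpace ℂ (Fin n × Fin m) := fun q => WithLp.toLp 2 (psiV n m q.1 q.2)
  have horth : Orthonormal ℂ f := by
    rw [orthonormal_iff_ite]
    rintro ⟨i, j⟩ ⟨k, l⟩
    have h := psiV_inner n m hnm i k j l
    simp only [Complex.star_def] at h
    rw [PiLp.inner_apply]
    simp only [RCLike.inner_apply, f]
    simp only [mul_comm (psiV n m k l _)]
    rw [h]
    simp [Prod.ext_iff]
  have hcard : Fintype.card (Fin m × Fin n)
      = Module.finrank ℂ (EuclideanSpace ℂ (Fin n × Fin m)) := by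
    simp [finrank_euclideanSpace]
    ring
  have hspan := horth.linearIndependent.span_eq_top_of_card_eq_finrank hcard
  have hmap := congrArg (Submodule.map (WithLp.linearEquiv 2 ℂ (Fin n × Fin m → ℂ)).toLinearMap) hspan
  rw [Submodule.map_span, ← Set.range_comp, Submodule.map_top, LinearEquiv.range] at hmap
  exact hmap
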